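/- Let G be a bipartite graph with partite sets X and Y, and let f : X → ℕ be a function taking positive values. If for every subset S ⊆ X it holds that |N_G(S)| ≥ Σ_{v∈S} f(v), then G has a subgraph H such that X ⊆ V(H), deg_H(u) = f(u) for every u ∈ X, and deg_H(v) = 1 for every v ∈ Y ∩ V(H). -/

import Mathlib

open SimpleGraph

variable {V : Type*}

/-- The disjoint union `P2 ∪ P3`: edge 0-1, path 2-3-4, on `Fin 5`. -/
def P2P3 : SimpleGraph (Fin 5) := SimpleGraph.fromRel (fun a b =>
  (a = 0 ∧ b = 1) ∨ (a = 2 ∧ b = 3) ∨ (a = 3 ∧ b = 4))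

/-- `G` has no induced subgraph isomorphic to `P2 ∪ P3`. -/
def P2P3Free (G : SimpleGraph V) : Prop :=
  ¬ ∃ f : Fin 5 ↪ V, ∀ a b, P2P3.Adj a b ↔ G.Adj (f a) (f b)

/-- The number of connected components of `G - S`. -/
noncomputable def numComponents [Fintype V] (G : SimpleGraph V) (S : Finset V) : ℕ :=
  Nat.card ((G.induce ((↑S : Set V)ᶜ)).ConnectedComponent)

/-- `G` is `t`-tough: `|S| ≥ t·c(G-S)` whenever `c(G-S) ≥ 2`. -/
def IsTough [Fintype V] (t : ℝ) (G : SimpleGraph V) : Prop :=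
  ∀ S : Finset V, 2 ≤ numComponents G S → t * numComponents G S ≤ S.card

theorem stmt1 [Fintype V] (G : SimpleGraph V) (X Y : Finset V)
    (hpart : ∀ v, v ∈ X ∨ v ∈ Y) (hdisj : Disjoint X Y)
    (hbip : ∀ u v, G.Adj u v → (u ∈ X ∧ v ∈ Y) ∨ (u ∈ Y ∧ v ∈ X))
    (f : V → ℕ) (hf : ∀ v ∈ X, 0 < f v)
    (hN : ∀ S ⊆ X, (∑ v ∈ S, f v) ≤ {v | ∃ u ∈ S, G.Adj u v}.ncard) :
    ∃ H : G.Subgraph, ↑X ⊆ H.verts ∧ (∀ u ∈ X, (H.neighborSet u).ncard = f u) ∧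
      ∀ v ∈ (↑Y ∩ H.verts : Set V), (H.neighborSet v).ncard = 1 := by
  classical
  -- Index type: for each x ∈ X, f x copies of x.
  let α := Σ x : {x // x ∈ X}, Fin (f x.1)
  let t : α → Finset V := fun p => Finset.univ.filter (fun v => G.Adj p.1.1 v)
  have hall : ∀ s : Finset α, s.card ≤ (s.biUnion t).card := by
    intro s
    set S : Finset V := s.image (fun p => p.1.1) with hS
    have hSX : S ⊆ X := by
      intro v hv
      rw [hS, Finset.mem_image] at hv
      obtain ⟨p, -, rfl⟩ := hv
      exact p.1.2
    have h1 : s.card ≤ ∑ x ∈ S, f x := by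
      rw [Finset.card_eq_sum_card_fiberwise
        (f := fun p : α => p.1.1) (t := S)
        (fun p hp => Finset.mem_image_of_mem _ hp)]
      refine Finset.sum_le_sum fun x hx => ?_
      have : (s.filter fun p : α => p.1.1 = x).card ≤ (Finset.range (f x)).card := by
        apply Finset.card_le_card_of_injOn (fun p => (p.2 : ℕ))
        · rintro ⟨⟨a, ha⟩, i⟩ hp
          simp only [Finset.mem_coe, Finset.mem_filter] at hp
          obtain ⟨-, rfl⟩ := hp
          exact Finset.mem_range.mpr i.isLt
        · rintro ⟨⟨a, ha⟩, i⟩ hp ⟨⟨b, hb⟩, j⟩ hq hij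
          simp only [Finset.coe_filter, Set.mem_setOf_eq] at hp hq
          obtain ⟨-, rfl⟩ := hp
          obtain ⟨-, rfl⟩ := hq
          have hij' : i = j := Fin.ext hij
          subst hij'
          rfl
      simpa using this
    have h3 : {v | ∃ u ∈ S, G.Adj u v} = ↑(s.biUnion t) := by
      ext v
      simp only [Set.mem_setOf_eq, Finset.coe_biUnion, Set.mem_iUnion, Finset.mem_coe,
        Finset.mem_filter, Finset.mem_univ, true_and, t, hS, Finset.mem_image]
      constructor
      · rintro ⟨u, ⟨p, hp, rfl⟩, hadj⟩
        exact ⟨p, hp, hadj⟩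
      · rintro ⟨p, hp, hadj⟩
        exact ⟨p.1.1, ⟨p, hp, rfl⟩, hadj⟩
    have h2 := hN S hSX
    rw [h3, Set.ncard_coe_finset] at h2
    exact h1.trans h2
  obtain ⟨g, ginj, hg⟩ := (Finset.all_card_le_biUnion_card_iff_exists_injective t).mp hall
  have hadj : ∀ p : α, G.Adj p.1.1 (g p) := by
    intro p
    have := hg p
    simpa [t] using this
  have hgY : ∀ p : α, g p ∈ Y := by
    intro p
    rcases hbip _ _ (hadj p) with ⟨-, h⟩ | ⟨h, -⟩
    · exact h
    · exact absurd p.1.2 (Finset.disjoint_right.mp hdisj h)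
  let H : G.Subgraph := {
    verts := ↑X ∪ Set.range g
    Adj := fun u v => (∃ p : α, p.1.1 = u ∧ g p = v) ∨ (∃ p : α, p.1.1 = v ∧ g p = u)
    adj_sub := by
      rintro u v (⟨p, rfl, rfl⟩ | ⟨p, rfl, rfl⟩)
      · exact hadj p
      · exact (hadj p).symm
    edge_vert := by
      rintro u v (⟨p, rfl, -⟩ | ⟨p, -, rfl⟩)
      · exact Or.inl p.1.2
      · exact Or.inr ⟨p, rfl⟩
    symm := by
      constructor
      rintro u v (h | h)
      · exact Or.inr h
      · exact Or.inl h }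
  have hHadj : ∀ u v, H.Adj u v ↔
      (∃ p : α, p.1.1 = u ∧ g p = v) ∨ (∃ p : α, p.1.1 = v ∧ g p = u) := fun _ _ => Iff.rfl
  refine ⟨H, ?_, ?_, ?_⟩
  · exact Set.subset_union_left
  · intro x hx
    have hset : H.neighborSet x = Set.range (fun i : Fin (f x) => g ⟨⟨x, hx⟩, i⟩) := by
      ext v
      simp only [Subgraph.mem_neighborSet, hHadj, Set.mem_range]
      constructor
      · rintro (⟨p, hp1, rfl⟩ | ⟨p, hp1, hp2⟩)
        · obtain ⟨⟨a, ha⟩, i⟩ := p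
          simp only at hp1
          subst hp1
          exact ⟨i, rfl⟩
        · exact absurd (hp2 ▸ hgY p) (Finset.disjoint_left.mp hdisj hx)
      · rintro ⟨i, rfl⟩
        exact Or.inl ⟨⟨⟨x, hx⟩, i⟩, rfl, rfl⟩
    have hinj : Function.Injective (fun i : Fin (f x) => g ⟨⟨x, hx⟩, i⟩) := by
      intro i j h
      have := ginj h
      simpa [Fin.ext_iff] using congrArg (fun p : α => (p.2 : ℕ)) this
    rw [hset]
    have : Set.range (fun i : Fin (f x) => g ⟨⟨x, hx⟩, i⟩)
        = ↑(Finset.univ.image (fun i : Fin (f x) => g ⟨⟨x, hx⟩, i⟩)) := by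
      simp
    rw [this, Set.ncard_coe_finset, Finset.card_image_of_injective _ hinj,
      Finset.card_univ, Fintype.card_fin]
  · rintro v ⟨hvY, hvV⟩
    have hvX : v ∉ X := Finset.disjoint_right.mp hdisj hvY
    rcases hvV with hvX' | ⟨p₀, rfl⟩
    · exact absurd hvX' hvX
    have hset : H.neighborSet (g p₀) = {p₀.1.1} := by
      ext u
      simp only [Subgraph.mem_neighborSet, hHadj, Set.mem_singleton_iff]
      constructor
      · rintro (⟨p, hp1, -⟩ | ⟨p, rfl, hp2⟩)
        · exact absurd (hp1 ▸ p.1.2) hvX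
        · rw [ginj hp2]
      · rintro rfl
        exact Or.inr ⟨p₀, rfl, rfl⟩
    rw [hset, Set.ncard_singleton]
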